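/- There is a diversity-seeking jump game on a star topology with n agents of k ≥ 2 types whose price of anarchy is at least (n−1)/(k−1). Concretely, on a star with n+1 nodes, with k−1 types of size 1 and one type ('red') of size n−k+1: the assignment placing a size-1-type agent at the center achieves social welfare n, while placing a red agent at the center is an equilibrium with social welfare (k−1)·n/(n−1). -/

import Mathlib

open Finset

variable {V τ : Type}

open Classical in
noncomputable def occNbrs [Fintype V] (G : SimpleGraph V) (C : V → Option τ) (v : V) :
    Finset V :=
  Finset.univ.filter (fun u => G.Adj v u ∧ (C u).isSome)

open Classical in
noncomputable def diffNbrs [Fintype V] (G : SimpleGraph V) (C : V → Option τ) (v : V)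
    (t : τ) : Finset V :=
  Finset.univ.filter (fun u => G.Adj v u ∧ ∃ s, C u = some s ∧ s ≠ t)

/-- Utility of the agent at node `v`: fraction of occupied neighbors of different type. -/
noncomputable def util [Fintype V] (G : SimpleGraph V) (C : V → Option τ) (v : V) : ℚ :=
  match C v with
  | none => 0
  | some t =>
      if (occNbrs G C v).card = 0 then 0
      else ((diffNbrs G C v t).card : ℚ) / ((occNbrs G C v).card : ℚ)

/-- The assignment after the agent at `u` jumps to node `w`. -/
def move [DecidableEq V] (C : V → Option τ) (u w : V) : V → Option τ :=
  fun x => if x = w then C u else if x = u then none else C x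

/-- An improving move: the agent at `u` jumps to the empty node `w`, strictly increasing
its utility. -/
def Improves [Fintype V] [DecidableEq V] (G : SimpleGraph V) (C : V → Option τ)
    (u w : V) : Prop :=
  (C u).isSome ∧ C w = none ∧ util G C u < util G (move C u w) w

/-- Pure Nash equilibrium: no agent can strictly improve by jumping to an empty node. -/
def IsEquil [Fintype V] [DecidableEq V] (G : SimpleGraph V) (C : V → Option τ) : Prop :=
  ∀ u w : V, (C u).isSome → C w = none → util G (move C u w) w ≤ util G C u

/-- Social welfare: sum of agents' utilities. -/
noncomputable def SW [Fintype V] (G : SimpleGraph V) (C : V → Option τ) : ℚ :=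
  ∑ v, util G C v

open Classical in
noncomputable def pw (C : V → Option τ) (m : ℚ) (u v : V) : ℚ :=
  if (C u).isNone ∨ (C v).isNone then m
  else if C u = C v then 1 else 0

open Classical in
/-- The potential function: sum over edges, weight 1 for same-type endpoints,
`m` if an endpoint is unoccupied, 0 for different-type endpoints. -/
noncomputable def potential [Fintype V] (G : SimpleGraph V) (C : V → Option τ)
    (m : ℚ) : ℚ :=
  (∑ p : V × V, if G.Adj p.1 p.2 then pw C m p.1 p.2 else 0) / 2

open Classical in
noncomputable def countType [Fintype V] (C : V → Option τ) (t : τ) : ℕ :=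
  (Finset.univ.filter (fun v => C v = some t)).card

open Classical in
noncomputable def emptyCount [Fintype V] (C : V → Option τ) : ℕ :=
  (Finset.univ.filter (fun v => C v = none)).card

/-- The star on `n+1` nodes with center `0`. -/
def starGraph (n : ℕ) : SimpleGraph (Fin (n + 1)) :=
  SimpleGraph.fromRel (fun u _ => u = 0)

lemma starGraph_adj (n : ℕ) (u v : Fin (n+1)) :
    (starGraph n).Adj u v ↔ u ≠ v ∧ (u = 0 ∨ v = 0) := by
  simp [starGraph]

lemma util_some [Fintype V] (G : SimpleGraph V) (C : V → Option τ) (v : V) (t : τ)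
    (h : C v = some t) :
    util G C v = if (occNbrs G C v).card = 0 then 0
      else ((diffNbrs G C v t).card : ℚ) / ((occNbrs G C v).card : ℚ) := by
  unfold util; rw [h]

lemma util_none [Fintype V] (G : SimpleGraph V) (C : V → Option τ) (v : V)
    (h : C v = none) : util G C v = 0 := by
  unfold util; rw [h]

lemma util_nonneg [Fintype V] (G : SimpleGraph V) (C : V → Option τ) (v : V) :
    0 ≤ util G C v := by
  cases h : C v with
  | none => rw [util_none _ _ _ h]
  | some t =>
    rw [util_some _ _ _ _ h]
    split_ifs
    · exact le_refl 0
    · positivity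

lemma occNbrs_leaf (n : ℕ) (C : Fin (n+1) → Option τ) (v : Fin (n+1)) (hv : v ≠ 0) :
    occNbrs (starGraph n) C v = if (C 0).isSome then {0} else ∅ := by
  classical
  split_ifs with h0
  · ext u
    simp only [occNbrs, mem_filter, mem_univ, true_and, mem_singleton, starGraph_adj]
    constructor
    · rintro ⟨⟨_, h | h⟩, _⟩
      · exact absurd h hv
      · exact h
    · rintro rfl; exact ⟨⟨hv, Or.inr rfl⟩, h0⟩
  · ext u
    simp only [occNbrs, mem_filter, mem_univ, true_and, notMem_empty, iff_false,
      starGraph_adj]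
    rintro ⟨⟨hne, h | h⟩, hs⟩
    · exact hv h
    · rw [h] at hs; exact h0 hs

open Classical in
lemma diffNbrs_leaf (n : ℕ) (C : Fin (n+1) → Option τ) (v : Fin (n+1)) (t : τ)
    (hv : v ≠ 0) :
    diffNbrs (starGraph n) C v t
      = if (∃ s, C 0 = some s ∧ s ≠ t) then {0} else ∅ := by
  classical
  split_ifs with h0
  · ext u
    simp only [diffNbrs, mem_filter, mem_univ, true_and, mem_singleton, starGraph_adj]
    constructor
    · rintro ⟨⟨_, h | h⟩, _⟩
      · exact absurd h hv
      · exact h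
    · rintro rfl; exact ⟨⟨hv, Or.inr rfl⟩, h0⟩
  · ext u
    simp only [diffNbrs, mem_filter, mem_univ, true_and, notMem_empty, iff_false,
      starGraph_adj]
    rintro ⟨⟨hne, h | h⟩, hs⟩
    · exact hv h
    · rw [h] at hs; exact h0 hs

open Classical in
lemma util_leaf (n : ℕ) (C : Fin (n+1) → Option τ) (v : Fin (n+1)) (t : τ)
    (hv : v ≠ 0) (hvt : C v = some t) :
    util (starGraph n) C v = if ∃ s, C 0 = some s ∧ s ≠ t then 1 else 0 := by
  rw [util_some _ _ _ _ hvt, occNbrs_leaf n C v hv, diffNbrs_leaf n C v t hv]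
  by_cases h0 : (C 0).isSome
  · rw [if_pos h0]
    by_cases hd : ∃ s, C 0 = some s ∧ s ≠ t
    · rw [if_pos hd, if_pos hd]; simp
    · rw [if_neg hd, if_neg hd]; simp
  · have h0' : C 0 = none := Option.not_isSome_iff_eq_none.mp h0
    rw [if_neg h0]
    simp [h0']
def Ceq (n k : ℕ) (h : 0 < k) : Fin (n+1) → Option (Fin k) := fun v =>
  if h0 : v.val = 0 then some ⟨k-1, by omega⟩
  else if h1 : v.val ≤ k-1 then some ⟨v.val - 1, by omega⟩
  else if v.val ≤ n-1 then some ⟨k-1, by omega⟩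
  else none

def CoptDef (n k : ℕ) (h : 0 < k) : Fin (n+1) → Option (Fin k) := fun v =>
  if v.val = 0 then some ⟨0, h⟩
  else if h1 : v.val ≤ k-2 then some ⟨v.val, by omega⟩
  else if v.val ≤ n-1 then some ⟨k-1, by omega⟩
  else none

lemma Ceq_spec (n k : ℕ) (h : 0 < k) (v : Fin (n+1)) (t : Fin k) :
    Ceq n k h v = some t ↔
      (v.val = 0 ∧ t.val = k-1) ∨
      (1 ≤ v.val ∧ v.val ≤ k-1 ∧ t.val = v.val - 1) ∨
      (k ≤ v.val ∧ v.val ≤ n-1 ∧ t.val = k-1) := by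
  have ht := t.isLt
  unfold Ceq
  split_ifs with h0 h1 h2 <;> simp [Fin.ext_iff, -Fin.val_eq_zero_iff] <;> omega

lemma Copt_spec (n k : ℕ) (h : 0 < k) (v : Fin (n+1)) (t : Fin k) :
    CoptDef n k h v = some t ↔
      (v.val = 0 ∧ t.val = 0) ∨
      (1 ≤ v.val ∧ v.val ≤ k-2 ∧ t.val = v.val) ∨
      (k-1 ≤ v.val ∧ v.val ≤ n-1 ∧ t.val = k-1) := by
  have ht := t.isLt
  unfold CoptDef
  split_ifs with h0 h1 h2 <;> simp [Fin.ext_iff, -Fin.val_eq_zero_iff] <;> omega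

lemma Ceq_isSome (n k : ℕ) (h : 0 < k) (hn : 1 ≤ n) (hkn : k ≤ n) (v : Fin (n+1)) :
    (Ceq n k h v).isSome ↔ v.val ≤ n - 1 := by
  have := v.isLt
  unfold Ceq
  split_ifs <;> simp <;> omega

lemma Copt_isSome (n k : ℕ) (h : 0 < k) (hn : 1 ≤ n) (hkn : k ≤ n) (v : Fin (n+1)) :
    (CoptDef n k h v).isSome ↔ v.val ≤ n - 1 := by
  have := v.isLt
  unfold CoptDef
  split_ifs <;> simp <;> omega

lemma Ceq_eq_none (n k : ℕ) (h : 0 < k) (hn : 1 ≤ n) (hkn : k ≤ n) (v : Fin (n+1)) :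
    Ceq n k h v = none ↔ v.val = n := by
  have := v.isLt
  unfold Ceq
  split_ifs <;> simp <;> omega

lemma Ceq_zero (n k : ℕ) (h : 0 < k) : Ceq n k h 0 = some ⟨k-1, by omega⟩ := by
  unfold Ceq; simp

lemma Copt_zero (n k : ℕ) (h : 0 < k) : CoptDef n k h 0 = some ⟨0, h⟩ := by
  unfold CoptDef; simp
lemma countType_Ceq (n k : ℕ) (h : 0 < k) (h2 : 2 ≤ k) (hkn : k ≤ n) (hn : 2 ≤ n)
    (t : Fin k) :
    countType (Ceq n k h) t = if t.val = k - 1 then n - k + 1 else 1 := by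
  classical
  have ht := t.isLt
  by_cases htk : t.val = k-1
  · rw [if_pos htk]
    have heq : countType (Ceq n k h) t =
        (Finset.attachFin (n := n+1) (insert 0 (Finset.Ico k n))
          (by intro m hm; simp [Finset.mem_Ico] at hm; omega)).card := by
      unfold countType
      apply congrArg Finset.card
      ext v
      simp [Ceq_spec, Finset.mem_attachFin, Finset.mem_Ico]
      omega
    rw [heq, Finset.card_attachFin,
      Finset.card_insert_of_notMem (by simp [Finset.mem_Ico]; omega), Nat.card_Ico]
  · rw [if_neg htk]
    have heq : countType (Ceq n k h) t =
        (Finset.attachFin (n := n+1) {t.val + 1} (by intro m hm; simp at hm; omega)).card := by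
      unfold countType
      apply congrArg Finset.card
      ext v
      simp [Ceq_spec, Finset.mem_attachFin]
      omega
    rw [heq, Finset.card_attachFin, Finset.card_singleton]

lemma countType_Copt (n k : ℕ) (h : 0 < k) (h2 : 2 ≤ k) (hkn : k ≤ n) (hn : 2 ≤ n)
    (t : Fin k) :
    countType (CoptDef n k h) t = if t.val = k - 1 then n - k + 1 else 1 := by
  classical
  have ht := t.isLt
  by_cases htk : t.val = k-1
  · rw [if_pos htk]
    have heq : countType (CoptDef n k h) t =
        (Finset.attachFin (n := n+1) (Finset.Ico (k-1) n)
          (by intro m hm; simp [Finset.mem_Ico] at hm; omega)).card := by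
      unfold countType
      apply congrArg Finset.card
      ext v
      simp [Copt_spec, Finset.mem_attachFin, Finset.mem_Ico]
      omega
    rw [heq, Finset.card_attachFin, Nat.card_Ico]
    omega
  · rw [if_neg htk]
    have heq : countType (CoptDef n k h) t =
        (Finset.attachFin (n := n+1) {t.val} (by intro m hm; simp at hm; omega)).card := by
      unfold countType
      apply congrArg Finset.card
      ext v
      simp [Copt_spec, Finset.mem_attachFin, -Fin.val_eq_zero_iff]
      omega
    rw [heq, Finset.card_attachFin, Finset.card_singleton]
lemma occNbrs_center_Ceq (n k : ℕ) (h : 0 < k) (hkn : k ≤ n) (hn : 2 ≤ n) :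
    (occNbrs (starGraph n) (Ceq n k h) 0).card = n - 1 := by
  classical
  have heq : (occNbrs (starGraph n) (Ceq n k h) 0).card =
      (Finset.attachFin (n := n+1) (Finset.Ico 1 n)
        (by intro m hm; simp [Finset.mem_Ico] at hm; omega)).card := by
    apply congrArg Finset.card
    ext u
    have hu := u.isLt
    simp [occNbrs, starGraph_adj, Finset.mem_attachFin, Finset.mem_Ico,
      Ceq_isSome n k h (by omega) hkn, Fin.ext_iff, -Fin.val_eq_zero_iff]
    omega
  rw [heq, Finset.card_attachFin, Nat.card_Ico]

lemma occNbrs_center_Copt (n k : ℕ) (h : 0 < k) (hkn : k ≤ n) (hn : 2 ≤ n) :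
    (occNbrs (starGraph n) (CoptDef n k h) 0).card = n - 1 := by
  classical
  have heq : (occNbrs (starGraph n) (CoptDef n k h) 0).card =
      (Finset.attachFin (n := n+1) (Finset.Ico 1 n)
        (by intro m hm; simp [Finset.mem_Ico] at hm; omega)).card := by
    apply congrArg Finset.card
    ext u
    have hu := u.isLt
    simp [occNbrs, starGraph_adj, Finset.mem_attachFin, Finset.mem_Ico,
      Copt_isSome n k h (by omega) hkn, Fin.ext_iff, -Fin.val_eq_zero_iff]
    omega
  rw [heq, Finset.card_attachFin, Nat.card_Ico]

lemma diffNbrs_center_Ceq (n k : ℕ) (h : 0 < k) (h2 : 2 ≤ k) (hkn : k ≤ n) (hn : 2 ≤ n) :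
    (diffNbrs (starGraph n) (Ceq n k h) 0 ⟨k-1, Nat.sub_one_lt (by omega)⟩).card = k - 1 := by
  classical
  have heq : (diffNbrs (starGraph n) (Ceq n k h) 0 ⟨k-1, Nat.sub_one_lt (by omega)⟩).card =
      (Finset.attachFin (n := n+1) (Finset.Ico 1 k)
        (by intro m hm; simp [Finset.mem_Ico] at hm; omega)).card := by
    apply congrArg Finset.card
    ext u
    have hu := u.isLt
    simp only [diffNbrs, mem_filter, mem_univ, true_and, Finset.mem_attachFin,
      Finset.mem_Ico, starGraph_adj]
    constructor
    · rintro ⟨⟨hne, -⟩, s, hs, hst⟩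
      rw [Ceq_spec] at hs
      have hs' : s.val ≠ k - 1 := by simpa [Fin.ext_iff] using hst
      have hu' : u.val ≠ 0 := by
        intro hh; exact hne (Fin.ext (by simpa using hh.symm))
      omega
    · rintro ⟨h1, hk1⟩
      refine ⟨⟨fun hh => ?_, by simp⟩, ⟨u.val - 1, by omega⟩, ?_, ?_⟩
      · have : u.val = 0 := by simpa [Fin.ext_iff, -Fin.val_eq_zero_iff] using hh.symm
        omega
      · rw [Ceq_spec]
        exact Or.inr (Or.inl ⟨h1, by omega, rfl⟩)
      · simp only [ne_eq, Fin.ext_iff]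
        omega
  rw [heq, Finset.card_attachFin, Nat.card_Ico]

lemma diffNbrs_center_Copt (n k : ℕ) (h : 0 < k) (h2 : 2 ≤ k) (hkn : k ≤ n) (hn : 2 ≤ n) :
    (diffNbrs (starGraph n) (CoptDef n k h) 0 ⟨0, h⟩).card = n - 1 := by
  classical
  have heq : (diffNbrs (starGraph n) (CoptDef n k h) 0 ⟨0, h⟩).card =
      (Finset.attachFin (n := n+1) (Finset.Ico 1 n)
        (by intro m hm; simp [Finset.mem_Ico] at hm; omega)).card := by
    apply congrArg Finset.card
    ext u
    have hu := u.isLt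
    simp only [diffNbrs, mem_filter, mem_univ, true_and, Finset.mem_attachFin,
      Finset.mem_Ico, starGraph_adj]
    constructor
    · rintro ⟨⟨hne, -⟩, s, hs, hst⟩
      rw [Copt_spec] at hs
      have hu' : u.val ≠ 0 := by
        intro hh; exact hne (Fin.ext (by simpa using hh.symm))
      omega
    · rintro ⟨h1, hk1⟩
      have hun : u.val ≤ n - 1 := by omega
      by_cases hreg : u.val ≤ k - 2
      · refine ⟨⟨fun hh => ?_, by simp⟩, ⟨u.val, by omega⟩, ?_, ?_⟩
        · have : u.val = 0 := by simpa [Fin.ext_iff, -Fin.val_eq_zero_iff] using hh.symm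
          omega
        · rw [Copt_spec]
          exact Or.inr (Or.inl ⟨h1, hreg, rfl⟩)
        · simp only [ne_eq, Fin.ext_iff]
          omega
      · refine ⟨⟨fun hh => ?_, by simp⟩, ⟨k - 1, by omega⟩, ?_, ?_⟩
        · have : u.val = 0 := by simpa [Fin.ext_iff, -Fin.val_eq_zero_iff] using hh.symm
          omega
        · rw [Copt_spec]
          exact Or.inr (Or.inr ⟨by omega, hun, rfl⟩)
        · simp only [ne_eq, Fin.ext_iff]
          omega
  rw [heq, Finset.card_attachFin, Nat.card_Ico]

lemma util_center_Ceq (n k : ℕ) (h : 0 < k) (h2 : 2 ≤ k) (hkn : k ≤ n) (hn : 2 ≤ n) :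
    util (starGraph n) (Ceq n k h) 0 = ((k:ℚ)-1)/((n:ℚ)-1) := by
  rw [util_some _ _ _ _ (Ceq_zero n k h), occNbrs_center_Ceq n k h hkn hn,
    diffNbrs_center_Ceq n k h h2 hkn hn, if_neg (by omega)]
  rw [Nat.cast_sub (by omega : 1 ≤ k), Nat.cast_sub (by omega : 1 ≤ n)]
  norm_num

lemma util_center_Copt (n k : ℕ) (h : 0 < k) (h2 : 2 ≤ k) (hkn : k ≤ n) (hn : 2 ≤ n) :
    util (starGraph n) (CoptDef n k h) 0 = 1 := by
  rw [util_some _ _ _ _ (Copt_zero n k h), occNbrs_center_Copt n k h hkn hn,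
    diffNbrs_center_Copt n k h h2 hkn hn, if_neg (by omega)]
  rw [div_self]
  intro hh
  rw [Nat.cast_eq_zero] at hh
  omega
lemma sw_Ceq (n k : ℕ) (h : 0 < k) (h2 : 2 ≤ k) (hkn : k ≤ n) (hn : 2 ≤ n) :
    SW (starGraph n) (Ceq n k h) = ((k:ℚ) - 1) * (n:ℚ) / ((n:ℚ) - 1) := by
  classical
  have hutil : ∀ v : Fin (n+1),
      util (starGraph n) (Ceq n k h) v =
        (if v.val = 0 then ((k:ℚ)-1)/((n:ℚ)-1) else 0) +
        (if 1 ≤ v.val ∧ v.val ≤ k-1 then 1 else 0) := by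
    intro v
    have hv := v.isLt
    by_cases hv0 : v.val = 0
    · have hv0' : v = 0 := Fin.ext (by simpa using hv0)
      rw [hv0', util_center_Ceq n k h h2 hkn hn]
      simp
    · have hvne : v ≠ 0 := by
        intro hh; exact hv0 (by rw [hh]; rfl)
      rw [if_neg hv0]
      by_cases hv1 : v.val ≤ k-1
      · have hsome : Ceq n k h v = some ⟨v.val - 1, by omega⟩ := by
          rw [Ceq_spec]; exact Or.inr (Or.inl ⟨by omega, hv1, rfl⟩)
        rw [util_leaf n _ v _ hvne hsome,
          if_pos ⟨⟨k-1, by omega⟩, Ceq_zero n k h, by simp [Fin.ext_iff]; omega⟩,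
          if_pos (⟨by omega, hv1⟩ : 1 ≤ v.val ∧ v.val ≤ k-1)]
        norm_num
      · by_cases hv2 : v.val ≤ n-1
        · have hsome : Ceq n k h v = some ⟨k-1, by omega⟩ := by
            rw [Ceq_spec]; exact Or.inr (Or.inr ⟨by omega, hv2, rfl⟩)
          have hnd : ¬∃ s, Ceq n k h 0 = some s ∧ s ≠ (⟨k-1, by omega⟩ : Fin k) := by
            rintro ⟨s, hs, hst⟩
            rw [Ceq_zero] at hs
            simp only [Option.some.injEq] at hs
            exact hst hs.symm
          rw [util_leaf n _ v _ hvne hsome, if_neg hnd,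
            if_neg (by omega : ¬(1 ≤ v.val ∧ v.val ≤ k-1))]
          norm_num
        · have hnone : Ceq n k h v = none := by
            rw [Ceq_eq_none n k h (by omega) hkn]; omega
          rw [util_none _ _ _ hnone,
            if_neg (by omega : ¬(1 ≤ v.val ∧ v.val ≤ k-1))]
          norm_num
  unfold SW
  rw [Finset.sum_congr rfl (fun v _ => hutil v), Finset.sum_add_distrib]
  rw [Fin.sum_univ_eq_sum_range (fun x => if x = 0 then ((k:ℚ)-1)/((n:ℚ)-1) else 0),
    Fin.sum_univ_eq_sum_range (fun x => if 1 ≤ x ∧ x ≤ k-1 then (1:ℚ) else 0)]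
  rw [Finset.sum_ite_eq' (Finset.range (n+1)) 0 (fun _ => ((k:ℚ)-1)/((n:ℚ)-1)),
    if_pos (by simp), Finset.sum_boole]
  have hfil : (Finset.range (n+1)).filter (fun x => 1 ≤ x ∧ x ≤ k-1)
      = Finset.Ico 1 k := by
    ext x; simp [Finset.mem_Ico]; omega
  rw [hfil, Nat.card_Ico]
  rw [Nat.cast_sub (by omega : 1 ≤ k), Nat.cast_one]
  have hne : (n:ℚ) - 1 ≠ 0 := by
    have : (2:ℚ) ≤ (n:ℚ) := by exact_mod_cast hn
    intro hh; nlinarith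
  field_simp
  ring

lemma sw_Copt (n k : ℕ) (h : 0 < k) (h2 : 2 ≤ k) (hkn : k ≤ n) (hn : 2 ≤ n) :
    SW (starGraph n) (CoptDef n k h) = (n:ℚ) := by
  classical
  have hutil : ∀ v : Fin (n+1),
      util (starGraph n) (CoptDef n k h) v =
        (if v.val ≤ n-1 then (1:ℚ) else 0) := by
    intro v
    have hv := v.isLt
    by_cases hv0 : v.val = 0
    · have hv0' : v = 0 := Fin.ext (by simpa using hv0)
      rw [hv0', util_center_Copt n k h h2 hkn hn, if_pos (by simp)]
    · have hvne : v ≠ 0 := by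
        intro hh; exact hv0 (by rw [hh]; rfl)
      by_cases hv2 : v.val ≤ n-1
      · by_cases hv1 : v.val ≤ k-2
        · have hsome : CoptDef n k h v = some ⟨v.val, by omega⟩ := by
            rw [Copt_spec]; exact Or.inr (Or.inl ⟨by omega, hv1, rfl⟩)
          rw [util_leaf n _ v _ hvne hsome,
            if_pos ⟨⟨0, h⟩, Copt_zero n k h, by simp [Fin.ext_iff]; omega⟩,
            if_pos hv2]
        · have hsome : CoptDef n k h v = some ⟨k-1, by omega⟩ := by
            rw [Copt_spec]; exact Or.inr (Or.inr ⟨by omega, hv2, rfl⟩)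
          rw [util_leaf n _ v _ hvne hsome,
            if_pos ⟨⟨0, h⟩, Copt_zero n k h, by simp [Fin.ext_iff]; omega⟩,
            if_pos hv2]
      · have hnone : CoptDef n k h v = none := by
          have hs := Copt_isSome n k h (by omega) hkn v
          rw [← Option.not_isSome_iff_eq_none]
          intro hh
          exact hv2 (hs.mp hh)
        rw [util_none _ _ _ hnone, if_neg hv2]
  unfold SW
  rw [Finset.sum_congr rfl (fun v _ => hutil v),
    Fin.sum_univ_eq_sum_range (fun x => if x ≤ n-1 then (1:ℚ) else 0),
    Finset.sum_boole]
  have hfil : (Finset.range (n+1)).filter (fun x => x ≤ n-1)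
      = Finset.range n := by
    ext x; simp; omega
  rw [hfil, Finset.card_range]

lemma equil_Ceq (n k : ℕ) (h : 0 < k) (h2 : 2 ≤ k) (hkn : k ≤ n) (hn : 2 ≤ n) :
    IsEquil (starGraph n) (Ceq n k h) := by
  intro u w hu hw
  have hwval : w.val = n := (Ceq_eq_none n k h (by omega) hkn w).mp hw
  have hwne : w ≠ 0 := by
    intro hh; rw [hh] at hwval; simp at hwval; omega
  obtain ⟨t, ht⟩ := Option.isSome_iff_exists.mp hu
  by_cases hu0 : u = 0
  · subst hu0
    have hC'w : (move (Ceq n k h) 0 w) w = some t := by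
      unfold move; rw [if_pos rfl, ht]
    have hC'0 : (move (Ceq n k h) 0 w) 0 = none := by
      unfold move; rw [if_neg (Ne.symm hwne), if_pos rfl]
    rw [util_leaf n _ w t hwne hC'w, if_neg ?_]
    · exact util_nonneg _ _ _
    · rintro ⟨s, hs, -⟩
      rw [hC'0] at hs
      simp at hs
  · have hune : u ≠ 0 := hu0
    have hC'w : (move (Ceq n k h) u w) w = some t := by
      unfold move; rw [if_pos rfl, ht]
    have hC'0 : (move (Ceq n k h) u w) 0 = Ceq n k h 0 := by
      unfold move; rw [if_neg (Ne.symm hwne), if_neg (Ne.symm hune)]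
    rw [util_leaf n _ w t hwne hC'w]
    by_cases htk : t.val = k-1
    · rw [if_neg ?_]
      · exact util_nonneg _ _ _
      · rintro ⟨s, hs, hst⟩
        rw [hC'0, Ceq_zero] at hs
        simp only [Option.some.injEq] at hs
        simp only [ne_eq, Fin.ext_iff] at hst
        rw [← hs] at hst
        simp at hst
        omega
    · rw [if_pos ⟨⟨k-1, by omega⟩, by rw [hC'0, Ceq_zero], by simp [Fin.ext_iff]; omega⟩,
        util_leaf n _ u t hune ht,
        if_pos ⟨⟨k-1, by omega⟩, Ceq_zero n k h, by simp [Fin.ext_iff]; omega⟩]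
/-- On a star with n+1 nodes, with k−1 types of size 1 and one 'red' type
(type k−1) of size n−k+1: placing a size-1-type agent at the center gives social welfare
n, while placing a red agent at the center is an equilibrium with social welfare
(k−1)·n/(n−1); hence the price of anarchy is at least (n−1)/(k−1). -/
theorem stmt9 (n k : ℕ) (hk : 2 ≤ k) (hkn : k ≤ n) (hn : 2 ≤ n) :
    ∃ C Copt : Fin (n + 1) → Option (Fin k),
      (∀ t : Fin k, countType C t = if t.val = k - 1 then n - k + 1 else 1) ∧
      (∀ t : Fin k, countType Copt t = if t.val = k - 1 then n - k + 1 else 1) ∧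
      (∃ t : Fin k, t.val < k - 1 ∧ Copt 0 = some t) ∧
      SW (starGraph n) Copt = (n : ℚ) ∧
      C 0 = some ⟨k - 1, by omega⟩ ∧
      IsEquil (starGraph n) C ∧
      SW (starGraph n) C = ((k : ℚ) - 1) * (n : ℚ) / ((n : ℚ) - 1) := by
  have h : 0 < k := by omega
  refine ⟨Ceq n k h, CoptDef n k h, ?_, ?_, ?_, ?_, ?_, ?_, ?_⟩
  · exact countType_Ceq n k h hk hkn hn
  · exact countType_Copt n k h hk hkn hn
  · exact ⟨⟨0, h⟩, show (0:ℕ) < k - 1 by omega, Copt_zero n k h⟩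
  · exact sw_Copt n k h hk hkn hn
  · exact Ceq_zero n k h
  · exact equil_Ceq n k h hk hkn hn
  · exact sw_Ceq n k h hk hkn hn
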